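/- For odd j ≥ 1 and 0 ≤ τ < 1, I_j := ∫_0^∞ y^j erfc(√(2/(1−τ)) y) e^{y²} dy equals ((−1)^{(j−1)/2} ((j−1)/2)! / 2) · ( √(2/(1+τ)) Σ_{p=0}^{(j−1)/2} (−1)^p ((1−τ)/(1+τ))^p (1/2)_p / p! − 1 ), where (a)_p denotes the Pochhammer symbol. -/

import Mathlib

open MeasureTheory Set Real Filter

/-- The complementary error function `erfc(x) = (2/√π) ∫_x^∞ e^{-t²} dt`. -/
noncomputable def erfc (x : ℝ) : ℝ :=
  (2 / Real.sqrt Real.pi) * ∫ t in Set.Ioi x, Real.exp (-t ^ 2)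

lemma integrable_exp_neg_sq : Integrable (fun t : ℝ => Real.exp (-t ^ 2)) := by
  simpa using integrable_exp_neg_mul_sq (one_pos)

lemma integral_exp_neg_sq_Ioi_zero : ∫ t in Ioi (0:ℝ), Real.exp (-t ^ 2) = Real.sqrt Real.pi / 2 := by
  have h := integral_gaussian_Ioi 1
  simpa using h

lemma erfc_zero : erfc 0 = 1 := by
  have h : Real.sqrt Real.pi ≠ 0 := by positivity
  rw [erfc, integral_exp_neg_sq_Ioi_zero]
  field_simp

lemma erfc_eq_one_sub (x : ℝ) :
    erfc x = 1 - (2 / Real.sqrt Real.pi) * ∫ t in (0:ℝ)..x, Real.exp (-t ^ 2) := by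
  have key : (∫ t in Ioi x, Real.exp (-t ^ 2))
      = (∫ t in Ioi (0:ℝ), Real.exp (-t ^ 2)) - ∫ t in (0:ℝ)..x, Real.exp (-t ^ 2) := by
    rcases le_or_gt 0 x with hx | hx
    · rw [intervalIntegral.integral_of_le hx, eq_sub_iff_add_eq, add_comm,
        ← setIntegral_union (by rw [Set.disjoint_iff]; rintro t ⟨⟨_, h1⟩, h2⟩; exact absurd h2 (not_lt.2 h1)) measurableSet_Ioi
          (integrable_exp_neg_sq.integrableOn) (integrable_exp_neg_sq.integrableOn),
        Set.Ioc_union_Ioi_eq_Ioi hx]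
    · rw [intervalIntegral.integral_symm, intervalIntegral.integral_of_le hx.le, sub_neg_eq_add, add_comm,
        ← setIntegral_union (by rw [Set.disjoint_iff]; rintro t ⟨⟨_, h1⟩, h2⟩; exact absurd h2 (not_lt.2 h1)) measurableSet_Ioi
          (integrable_exp_neg_sq.integrableOn) (integrable_exp_neg_sq.integrableOn),
        Set.Ioc_union_Ioi_eq_Ioi hx.le]
  have h1 : erfc 0 = 1 := erfc_zero
  rw [erfc, key, mul_sub]
  rw [erfc] at h1
  rw [h1]

lemma hasDerivAt_erfc (x : ℝ) :
    HasDerivAt erfc (-(2 / Real.sqrt Real.pi) * Real.exp (-x ^ 2)) x := by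
  have h : HasDerivAt (fun u : ℝ => ∫ t in (0:ℝ)..u, Real.exp (-t ^ 2)) (Real.exp (-x ^ 2)) x := by
    refine intervalIntegral.integral_hasDerivAt_right
      (integrable_exp_neg_sq.intervalIntegrable)
      (integrable_exp_neg_sq.1.stronglyMeasurableAtFilter) ?_
    exact (Real.continuous_exp.comp (continuous_pow 2).neg).continuousAt
  have : HasDerivAt (fun u : ℝ => 1 - (2 / Real.sqrt Real.pi) * ∫ t in (0:ℝ)..u, Real.exp (-t ^ 2))
      (-(2 / Real.sqrt Real.pi) * Real.exp (-x ^ 2)) x := by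
    simpa [neg_mul] using ((h.const_mul (2 / Real.sqrt Real.pi)).const_sub 1)
  exact this.congr_of_eventuallyEq (Filter.Eventually.of_forall fun y => erfc_eq_one_sub y)

lemma continuous_erfc : Continuous erfc :=
  continuous_iff_continuousAt.2 fun x => (hasDerivAt_erfc x).continuousAt

lemma erfc_nonneg (x : ℝ) : 0 ≤ erfc x := by
  apply mul_nonneg (by positivity)
  exact setIntegral_nonneg measurableSet_Ioi fun t _ => (Real.exp_pos _).le

lemma integral_exp_neg_mul_Ioi {b : ℝ} (hb : 0 < b) (c : ℝ) :
    ∫ t in Ioi c, Real.exp (-(b * t)) = Real.exp (-(b * c)) / b := by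
  have h := integral_comp_mul_left_Ioi (fun u : ℝ => Real.exp (-u)) c hb
  simp only [smul_eq_mul, integral_exp_neg_Ioi] at h
  rw [h]; field_simp

lemma erfc_le_of_pos {x : ℝ} (hx : 0 < x) :
    erfc x ≤ Real.exp (-x ^ 2) / (Real.sqrt Real.pi * x) := by
  have hint : IntegrableOn (fun t : ℝ => Real.exp (x ^ 2) * Real.exp (-(2 * x * t))) (Ioi x) := by
    simp_rw [show ∀ t : ℝ, -(2 * x * t) = -(2 * x) * t from fun t => (neg_mul _ _).symm]
    exact (exp_neg_integrableOn_Ioi x (by positivity : (0:ℝ) < 2 * x)).const_mul _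
  have hmono : (∫ t in Ioi x, Real.exp (-t ^ 2))
      ≤ ∫ t in Ioi x, Real.exp (x ^ 2) * Real.exp (-(2 * x * t)) := by
    refine setIntegral_mono_on integrable_exp_neg_sq.integrableOn hint measurableSet_Ioi ?_
    intro t ht
    rw [← Real.exp_add]
    apply Real.exp_le_exp.2
    nlinarith [sq_nonneg (t - x), (mem_Ioi.1 ht)]
  have hval : (∫ t in Ioi x, Real.exp (x ^ 2) * Real.exp (-(2 * x * t)))
      = Real.exp (-x ^ 2) / (2 * x) := by
    rw [integral_const_mul, integral_exp_neg_mul_Ioi (by positivity : (0:ℝ) < 2 * x) x,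
      mul_div_assoc', ← Real.exp_add]
    congr 2
    ring
  have hπ : 0 < Real.sqrt Real.pi := Real.sqrt_pos.2 Real.pi_pos
  rw [erfc]
  calc 2 / Real.sqrt Real.pi * ∫ t in Ioi x, Real.exp (-t ^ 2)
      ≤ 2 / Real.sqrt Real.pi * (Real.exp (-x ^ 2) / (2 * x)) := by
        apply mul_le_mul_of_nonneg_left (hval ▸ hmono) (by positivity)
    _ = Real.exp (-x ^ 2) / (Real.sqrt Real.pi * x) := by
        field_simp

lemma erfc_mul_exp_le {x : ℝ} (hx : 0 ≤ x) : erfc x * Real.exp (x ^ 2) ≤ 1 := by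
  set φ : ℝ → ℝ := fun y => erfc y * Real.exp (y ^ 2) with hφ
  have hder : ∀ y : ℝ, HasDerivAt φ
      (-(2 / Real.sqrt Real.pi) * Real.exp (-y ^ 2) * Real.exp (y ^ 2)
        + erfc y * (Real.exp (y ^ 2) * (2 * y ^ 1))) y := by
    intro y
    have h1 : HasDerivAt (fun y : ℝ => Real.exp (y ^ 2)) (Real.exp (y ^ 2) * (2 * y ^ 1)) y := by
      simpa using (hasDerivAt_pow 2 y).exp
    exact (hasDerivAt_erfc y).mul h1
  have hanti : AntitoneOn φ (Ici 0) := by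
    apply antitoneOn_of_deriv_nonpos (convex_Ici 0)
    · exact (continuous_erfc.mul (Real.continuous_exp.comp (continuous_pow 2))).continuousOn
    · intro y hy
      exact ((hder y).differentiableAt).differentiableWithinAt
    · intro y hy
      rw [interior_Ici] at hy
      rw [(hder y).deriv]
      have hy0 : 0 < y := mem_Ioi.1 hy
      have hb := erfc_le_of_pos hy0
      have hπ : 0 < Real.sqrt Real.pi := Real.sqrt_pos.2 Real.pi_pos
      have hexp : Real.exp (-y ^ 2) * Real.exp (y ^ 2) = 1 := by
        rw [← Real.exp_add]; simp
      have h2 : erfc y * (Real.exp (y ^ 2) * (2 * y ^ 1))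
          ≤ (Real.exp (-y ^ 2) / (Real.sqrt Real.pi * y)) * (Real.exp (y ^ 2) * (2 * y ^ 1)) := by
        apply mul_le_mul_of_nonneg_right hb (by positivity)
      have h3 : (Real.exp (-y ^ 2) / (Real.sqrt Real.pi * y)) * (Real.exp (y ^ 2) * (2 * y ^ 1))
          = 2 / Real.sqrt Real.pi := by
        rw [pow_one]
        field_simp
        linear_combination hexp
      have h4 : -(2 / Real.sqrt Real.pi) * Real.exp (-y ^ 2) * Real.exp (y ^ 2)
          = -(2 / Real.sqrt Real.pi) := by
        rw [mul_assoc, hexp, mul_one]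
      linarith [h2.trans_eq h3]
  have h0 : φ 0 = 1 := by simp [hφ, erfc_zero]
  have h := hanti self_mem_Ici (mem_Ici.2 hx) hx
  rw [h0] at h
  exact h

/-- The Pochhammer symbol `(1/2)_p = (1/2)(3/2)⋯(1/2 + p - 1)`. -/
noncomputable def pochHalf (p : ℕ) : ℝ :=
  ∏ i ∈ Finset.range p, ((1 : ℝ) / 2 + i)

lemma Gamma_nat_add_half (n : ℕ) :
    Real.Gamma ((n : ℝ) + 1 / 2) = pochHalf n * Real.sqrt Real.pi := by
  induction n with
  | zero =>
    have := Real.Gamma_one_half_eq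
    norm_num [pochHalf] at this ⊢
    exact this
  | succ k ih =>
    have h : ((k : ℝ) + 1) + 1 / 2 = ((k : ℝ) + 1 / 2) + 1 := by ring
    rw [Nat.cast_succ, h, Real.Gamma_add_one (by positivity), ih]
    rw [show pochHalf (k+1) = pochHalf k * (1/2 + (k:ℝ)) from Finset.prod_range_succ (fun i : ℕ => ((1 : ℝ) / 2 + i)) k]
    ring

lemma intPow {b : ℝ} (hb : 0 < b) (n : ℕ) :
    IntegrableOn (fun x : ℝ => x ^ n * Real.exp (-b * x ^ 2)) (Ioi 0) := by
  have h := integrableOn_rpow_mul_exp_neg_mul_sq hb (s := (n : ℝ))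
    (by exact_mod_cast neg_one_lt_zero.trans_le (Nat.cast_nonneg n))
  exact h.congr_fun (fun x _ => by simp only [Real.rpow_natCast]) measurableSet_Ioi

lemma J_val {lam : ℝ} (hlam : 0 < lam) (n : ℕ) :
    ∫ y in Ioi (0:ℝ), y ^ (2 * n) * Real.exp (-lam * y ^ 2)
      = pochHalf n * Real.sqrt Real.pi * lam ^ (-((n : ℝ) + 1 / 2)) / 2 := by
  have h := integral_rpow_mul_exp_neg_mul_rpow (p := 2) (q := ((2 * n : ℕ) : ℝ))
    (b := lam) two_pos (by exact_mod_cast neg_one_lt_zero.trans_le (Nat.cast_nonneg _)) hlam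
  have hconv : ∫ y in Ioi (0:ℝ), y ^ (2 * n) * Real.exp (-lam * y ^ 2)
      = ∫ x in Ioi (0:ℝ), x ^ ((2 * n : ℕ) : ℝ) * Real.exp (-lam * x ^ (2 : ℝ)) := by
    refine setIntegral_congr_fun measurableSet_Ioi fun x hx => ?_
    rw [Real.rpow_natCast, show (2:ℝ) = ((2:ℕ):ℝ) by norm_num, Real.rpow_natCast]
  rw [hconv, h]
  have e1 : (-(((2 * n : ℕ) : ℝ) + 1) / 2) = -((n : ℝ) + 1 / 2) := by push_cast; ring
  have e2 : ((((2 * n : ℕ) : ℝ)) + 1) / 2 = (n : ℝ) + 1 / 2 := by push_cast; ring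
  rw [e1, e2, _root_.Gamma_nat_add_half]
  ring

lemma tendsto_pow_mul_exp_neg_lam {lam : ℝ} (hlam : 0 < lam) (n : ℕ) :
    Filter.Tendsto (fun y : ℝ => y ^ n * Real.exp (-lam * y ^ 2)) atTop (nhds 0) := by
  have h1 : Filter.Tendsto (fun u : ℝ => u ^ n * Real.exp (-u)) atTop (nhds 0) :=
    tendsto_pow_mul_exp_neg_atTop_nhds_zero n
  have h2 : Filter.Tendsto (fun y : ℝ => lam * y ^ 2) atTop atTop :=
    (tendsto_pow_atTop two_ne_zero).const_mul_atTop hlam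
  have h3 : Filter.Tendsto (fun y : ℝ => (lam * y ^ 2) ^ n * Real.exp (-(lam * y ^ 2)))
      atTop (nhds 0) := h1.comp h2
  have h4 : Filter.Tendsto (fun y : ℝ => (lam ^ n)⁻¹ * ((lam * y ^ 2) ^ n * Real.exp (-(lam * y ^ 2))))
      atTop (nhds 0) := by simpa using h3.const_mul ((lam ^ n)⁻¹)
  refine tendsto_of_tendsto_of_tendsto_of_le_of_le' tendsto_const_nhds h4 ?_ ?_
  · filter_upwards [eventually_ge_atTop (0:ℝ)] with y hy
    positivity
  · filter_upwards [eventually_ge_atTop (1:ℝ)] with y hy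
    have h5 : y ^ n ≤ y ^ (2 * n) := pow_le_pow_right₀ hy (by omega)
    have h6 : (lam ^ n)⁻¹ * ((lam * y ^ 2) ^ n * Real.exp (-(lam * y ^ 2)))
        = y ^ (2 * n) * Real.exp (-lam * y ^ 2) := by
      rw [mul_pow, pow_mul, ← mul_assoc, neg_mul]
      have : 0 < lam ^ n := by positivity
      field_simp
    rw [h6]
    exact mul_le_mul_of_nonneg_right h5 (Real.exp_pos _).le

section IBP

variable {a lam : ℝ}

lemma continuous_E (a : ℝ) : Continuous (fun y : ℝ => erfc (a * y) * Real.exp (y ^ 2)) :=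
  (continuous_erfc.comp (continuous_const.mul continuous_id)).mul
    (Real.continuous_exp.comp (continuous_pow 2))

lemma E_nonneg (a : ℝ) (y : ℝ) : 0 ≤ erfc (a * y) * Real.exp (y ^ 2) :=
  mul_nonneg (erfc_nonneg _) (Real.exp_pos _).le

lemma E_le (ha : 0 < a) (h2 : a ^ 2 = lam + 1) {y : ℝ} (hy : 0 ≤ y) :
    erfc (a * y) * Real.exp (y ^ 2) ≤ Real.exp (-lam * y ^ 2) := by
  have h := erfc_mul_exp_le (mul_nonneg ha.le hy)
  calc erfc (a * y) * Real.exp (y ^ 2)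
      = (erfc (a * y) * Real.exp ((a * y) ^ 2)) * Real.exp (y ^ 2 - (a * y) ^ 2) := by
        rw [mul_assoc, ← Real.exp_add]
        congr 2
        ring
    _ ≤ 1 * Real.exp (y ^ 2 - (a * y) ^ 2) :=
        mul_le_mul_of_nonneg_right h (Real.exp_pos _).le
    _ = Real.exp (-lam * y ^ 2) := by
        rw [one_mul]
        congr 1
        linear_combination (-(y ^ 2)) * h2

lemma intE (ha : 0 < a) (hlam : 0 < lam) (h2 : a ^ 2 = lam + 1) (n : ℕ) :
    IntegrableOn (fun y : ℝ => y ^ n * (erfc (a * y) * Real.exp (y ^ 2))) (Ioi 0) := by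
  refine Integrable.mono' (intPow hlam n) ?_ ?_
  · exact ((continuous_pow n).mul (continuous_E a)).aestronglyMeasurable.restrict
  · filter_upwards [ae_restrict_mem measurableSet_Ioi] with y hy
    have hy0 : 0 ≤ y := (mem_Ioi.1 hy).le
    rw [Real.norm_eq_abs, abs_of_nonneg (mul_nonneg (pow_nonneg hy0 n) (E_nonneg a y))]
    exact mul_le_mul_of_nonneg_left (E_le ha h2 hy0) (pow_nonneg hy0 n)

lemma ibp (ha : 0 < a) (hlam : 0 < lam) (h2 : a ^ 2 = lam + 1) (n : ℕ) :
    ∫ y in Ioi (0:ℝ), y ^ (2 * n + 1) * (erfc (a * y) * Real.exp (y ^ 2))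
      = (a / Real.sqrt Real.pi) * (∫ y in Ioi (0:ℝ), y ^ (2 * n) * Real.exp (-lam * y ^ 2))
        - (n : ℝ) * (∫ y in Ioi (0:ℝ), y ^ (2 * n - 1) * (erfc (a * y) * Real.exp (y ^ 2)))
        - (if n = 0 then (1 / 2 : ℝ) else 0) := by
  have hπ : 0 < Real.sqrt Real.pi := Real.sqrt_pos.2 Real.pi_pos
  set E : ℝ → ℝ := fun y => erfc (a * y) * Real.exp (y ^ 2) with hE
  set H : ℝ → ℝ := fun y => (1 / 2) * (y ^ (2 * n) * E y) with hH
  set f' : ℝ → ℝ := fun y =>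
    (n : ℝ) * (y ^ (2 * n - 1) * E y) + y ^ (2 * n + 1) * E y
      - a / Real.sqrt Real.pi * (y ^ (2 * n) * Real.exp (-lam * y ^ 2)) with hf'
  have hderiv : ∀ y : ℝ, HasDerivAt H (f' y) y := by
    intro y
    have herfc : HasDerivAt (fun y : ℝ => erfc (a * y))
        (-(2 / Real.sqrt Real.pi) * Real.exp (-(a * y) ^ 2) * a) y := by
      have hay : HasDerivAt (fun y : ℝ => a * y) a y := by
        simpa using (hasDerivAt_id y).const_mul a
      exact (hasDerivAt_erfc (a * y)).comp y hay
    have hexp : HasDerivAt (fun y : ℝ => Real.exp (y ^ 2))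
        (Real.exp (y ^ 2) * (2 * y ^ 1)) y := by
      simpa using (hasDerivAt_pow 2 y).exp
    have hEd : HasDerivAt E
        (-(2 / Real.sqrt Real.pi) * Real.exp (-(a * y) ^ 2) * a * Real.exp (y ^ 2)
          + erfc (a * y) * (Real.exp (y ^ 2) * (2 * y ^ 1))) y := herfc.mul hexp
    have hpow : HasDerivAt (fun y : ℝ => y ^ (2 * n)) ((2 * n : ℕ) * y ^ (2 * n - 1)) y :=
      hasDerivAt_pow (2 * n) y
    have hmain := ((hpow.mul hEd).const_mul (1 / 2 : ℝ))
    have hexp2 : Real.exp (-(a * y) ^ 2) * Real.exp (y ^ 2) = Real.exp (-lam * y ^ 2) := by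
      rw [← Real.exp_add]
      congr 1
      linear_combination (-(y ^ 2)) * h2
    refine hmain.congr_deriv ?_
    symm
    simp only [hf', hE]
    rw [← hexp2]
    push_cast
    field_simp
    ring
  have hint : IntegrableOn f' (Ioi 0) := by
    refine (((intE ha hlam h2 (2 * n - 1)).const_mul _).add (intE ha hlam h2 (2 * n + 1))).sub
      ((intPow hlam (2 * n)).const_mul _)
  have htend : Filter.Tendsto H atTop (nhds 0) := by
    have hup : Filter.Tendsto (fun y : ℝ => (1 / 2 : ℝ) * (y ^ (2 * n) * Real.exp (-lam * y ^ 2)))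
        atTop (nhds 0) := by
      simpa using (tendsto_pow_mul_exp_neg_lam hlam (2 * n)).const_mul (1 / 2 : ℝ)
    refine tendsto_of_tendsto_of_tendsto_of_le_of_le' tendsto_const_nhds hup ?_ ?_
    · filter_upwards [eventually_ge_atTop (0:ℝ)] with y hy
      exact mul_nonneg (by norm_num) (mul_nonneg (pow_nonneg hy _) (E_nonneg a y))
    · filter_upwards [eventually_ge_atTop (0:ℝ)] with y hy
      exact mul_le_mul_of_nonneg_left
        (mul_le_mul_of_nonneg_left (E_le ha h2 hy) (pow_nonneg hy _)) (by norm_num)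
  have hcont : ContinuousWithinAt H (Ici 0) 0 :=
    (continuous_const.mul ((continuous_pow (2 * n)).mul (continuous_E a))).continuousWithinAt
  have hFTC := integral_Ioi_of_hasDerivAt_of_tendsto hcont (fun y _ => hderiv y) hint htend
  have hH0 : H 0 = if n = 0 then (1 / 2 : ℝ) else 0 := by
    rcases Nat.eq_zero_or_pos n with hn | hn
    · subst hn
      simp [hH, hE, erfc_zero]
    · have : (0:ℝ) ^ (2 * n) = 0 := zero_pow (by omega)
      simp [hH, hE, this, Nat.pos_iff_ne_zero.1 hn]
  rw [hH0] at hFTC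
  have hsplit : ∫ y in Ioi (0:ℝ), f' y
      = (n : ℝ) * (∫ y in Ioi (0:ℝ), y ^ (2 * n - 1) * E y)
        + (∫ y in Ioi (0:ℝ), y ^ (2 * n + 1) * E y)
        - a / Real.sqrt Real.pi * (∫ y in Ioi (0:ℝ), y ^ (2 * n) * Real.exp (-lam * y ^ 2)) := by
    have h1 : IntegrableOn (fun y : ℝ => (n : ℝ) * (y ^ (2 * n - 1) * E y)) (Ioi 0) := by
      exact (intE ha hlam h2 (2 * n - 1)).const_mul _
    have h2' : IntegrableOn (fun y : ℝ => y ^ (2 * n + 1) * E y) (Ioi 0) :=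
      intE ha hlam h2 (2 * n + 1)
    have h3 : IntegrableOn (fun y : ℝ => a / Real.sqrt Real.pi *
        (y ^ (2 * n) * Real.exp (-lam * y ^ 2))) (Ioi 0) := by
      exact (intPow hlam (2 * n)).const_mul _
    have h12 : IntegrableOn (fun y : ℝ => (n : ℝ) * (y ^ (2 * n - 1) * E y)
        + y ^ (2 * n + 1) * E y) (Ioi 0) := h1.add h2'
    rw [hf']
    simp only
    rw [integral_sub h12 h3, integral_add h1 h2', integral_const_mul, integral_const_mul]
  rw [hsplit] at hFTC
  simp only [hE] at hFTC ⊢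
  linarith [hFTC]
end IBP

/-- `I_j = ∫_0^∞ y^j erfc(√(2/(1-τ)) y) e^{y²} dy`. -/
noncomputable def Ij (τ : ℝ) (j : ℕ) : ℝ :=
  ∫ y in Set.Ioi (0 : ℝ), y ^ j * erfc (Real.sqrt (2 / (1 - τ)) * y) * Real.exp (y ^ 2)

/-- closed form for `I_j`, `j = 2m+1` odd. -/
theorem Ij_closed_form (τ : ℝ) (hτ0 : 0 ≤ τ) (hτ1 : τ < 1) (m : ℕ) :
    Ij τ (2 * m + 1) =
      ((-1 : ℝ) ^ m * m.factorial / 2) *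
        (Real.sqrt (2 / (1 + τ)) *
          ∑ p ∈ Finset.range (m + 1),
            (-1 : ℝ) ^ p * ((1 - τ) / (1 + τ)) ^ p * pochHalf p / p.factorial - 1) := by
  have h1m : 0 < 1 - τ := by linarith
  have h1p : 0 < 1 + τ := by linarith
  set a : ℝ := Real.sqrt (2 / (1 - τ)) with haa
  set lam : ℝ := (1 + τ) / (1 - τ) with hlamdef
  have hlam : 0 < lam := by positivity
  have ha : 0 < a := Real.sqrt_pos.2 (by positivity)
  have h2 : a ^ 2 = lam + 1 := by
    rw [haa, Real.sq_sqrt (by positivity)]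
    rw [hlamdef]
    field_simp
    norm_num
  set σ : ℝ := Real.sqrt (2 / (1 + τ)) with hσdef
  set r : ℝ := (1 - τ) / (1 + τ) with hrdef
  have hr : r = lam⁻¹ := by rw [hrdef, hlamdef, inv_div]
  have hσ : a * (Real.sqrt lam)⁻¹ = σ := by
    rw [haa, ← Real.sqrt_inv, ← Real.sqrt_mul (by positivity), hσdef]
    congr 1
    rw [hlamdef, inv_div]
    field_simp
  have hπ : 0 < Real.sqrt Real.pi := Real.sqrt_pos.2 Real.pi_pos
  clear_value a lam σ r
  have hG : ∀ n : ℕ, (a / Real.sqrt Real.pi) *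
        (∫ y in Set.Ioi (0:ℝ), y ^ (2 * n) * Real.exp (-lam * y ^ 2))
      = σ / 2 * (pochHalf n * r ^ n) := by
    intro n
    rw [J_val hlam n]
    have hsplit : lam ^ (-((n:ℝ) + 1/2)) = (Real.sqrt lam)⁻¹ * r ^ n := by
      rw [show -((n:ℝ)+1/2) = (-(1/2)) + (-(n:ℝ)) by ring, Real.rpow_add hlam,
        Real.rpow_neg hlam.le (1/2), ← Real.sqrt_eq_rpow,
        Real.rpow_neg hlam.le, Real.rpow_natCast, hr, inv_pow]
    rw [hsplit, ← hσ]
    field_simp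
  have hI0 : (∫ y in Set.Ioi (0:ℝ), y ^ (2*0+1) * (erfc (a * y) * Real.exp (y ^ 2)))
      = σ / 2 - 1 / 2 := by
    rw [ibp ha hlam h2 0, hG 0]
    norm_num [pochHalf]
  have hstep : ∀ k : ℕ,
      (∫ y in Set.Ioi (0:ℝ), y ^ (2*(k+1)+1) * (erfc (a * y) * Real.exp (y ^ 2)))
      = σ / 2 * (pochHalf (k+1) * r ^ (k+1))
        - ((k:ℝ)+1) * ∫ y in Set.Ioi (0:ℝ), y ^ (2*k+1) * (erfc (a*y) * Real.exp (y^2)) := by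
    intro k
    rw [ibp ha hlam h2 (k+1), hG (k+1), if_neg (by omega : ¬(k+1 = 0)),
      show 2*(k+1)-1 = 2*k+1 from by omega]
    push_cast
    ring
  have main : ∀ n : ℕ,
      (∫ y in Set.Ioi (0:ℝ), y ^ (2*n+1) * (erfc (a * y) * Real.exp (y ^ 2)))
      = ((-1:ℝ)^n * n.factorial / 2) *
          (σ * ∑ p ∈ Finset.range (n+1),
            (-1:ℝ)^p * r^p * pochHalf p / p.factorial - 1) := by
    intro n
    induction n with
    | zero =>
      rw [hI0]
      norm_num [pochHalf]
      ring
    | succ k ih =>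
      rw [hstep k, ih, Finset.sum_range_succ _ (k+1)]
      have hfk : ((k.factorial : ℝ)) ≠ 0 := by
        exact_mod_cast (Nat.factorial_pos k).ne'
      have hfact : (((k+1).factorial : ℝ)) = ((k:ℝ)+1) * (k.factorial : ℝ) := by
        rw [Nat.factorial_succ]; push_cast; ring
      rw [hfact]
      have hk1 : ((k:ℝ)+1) ≠ 0 := by positivity
      obtain ⟨P, hP⟩ : ∃ P, pochHalf (k+1) = P := ⟨_, rfl⟩
      obtain ⟨c, hc⟩ : ∃ c, ((-1:ℝ))^k = c := ⟨_, rfl⟩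
      have hneg : ((-1:ℝ))^(k+1) = -c := by rw [pow_succ, hc]; ring
      have hcc : c^2 = 1 := by rw [← hc, ← pow_mul, mul_comm, pow_mul]; norm_num
      rw [hP, hc, hneg]
      field_simp
      linear_combination (-(σ*P*r*r^k)) * hcc
  unfold Ij
  have hcongr : (∫ y in Set.Ioi (0:ℝ),
        y ^ (2*m+1) * erfc (Real.sqrt (2 / (1 - τ)) * y) * Real.exp (y ^ 2))
      = ∫ y in Set.Ioi (0:ℝ), y ^ (2*m+1) * (erfc (a * y) * Real.exp (y ^ 2)) := by
    refine setIntegral_congr_fun measurableSet_Ioi fun y _ => ?_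
    rw [← haa, mul_assoc]
  rw [hcongr, main m]
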